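/- For all integers d, s with d ≥ 2s ≥ 2, there exist points y₁, …, y_d on the unit sphere S^{d−2s} ⊆ ℝ^{d−2s+1} such that every open hemisphere of S^{d−2s} contains all the points {y_i : i ∈ A} for some stable s-element subset A of {1,…,d}. -/

import Mathlib

open Polynomial

namespace GaleAux

attribute [local instance] Classical.propDecidable

lemma eps_sq {ε : ℝ} (hε : ε = 1 ∨ ε = -1) : ε * ε = 1 := by
  rcases hε with h | h <;> rw [h] <;> norm_num

lemma neg_one_pow_sq (a : ℕ) : ((-1:ℝ)^a) * ((-1:ℝ)^a) = 1 := by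
  rw [← pow_add]
  have h : (-1:ℝ)^(a+a) = ((-1:ℝ)^2)^a := by rw [← pow_mul]; ring_nf
  rw [h, neg_one_sq, one_pow]

lemma pos_of_alt {ε : ℝ} (hε : ε = 1 ∨ ε = -1) {i : ℕ} {v : ℝ}
    (h : 0 ≤ ε * (-1)^i * v) (hv : v ≠ 0) : 0 < ε * (-1)^i * v := by
  rcases h.lt_or_eq with h' | h'
  · exact h'
  · exfalso
    have hεne : ε ≠ 0 := by rcases hε with h | h <;> rw [h] <;> norm_num
    have : ε * (-1:ℝ)^i * v ≠ 0 :=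
      mul_ne_zero (mul_ne_zero hεne (pow_ne_zero _ (by norm_num))) hv
    exact this h'.symm

lemma exists_root_between {W : ℝ[X]} {u v : ℝ} (huv : u < v)
    (h : W.eval u * W.eval v < 0) : ∃ r, u < r ∧ r < v ∧ W.eval r = 0 := by
  have hc : ContinuousOn (fun x => W.eval x) (Set.Icc u v) := (W.continuous).continuousOn
  rcases mul_neg_iff.1 h with ⟨hu, hv'⟩ | ⟨hu, hv'⟩
  · -- eval u > 0 > eval v : decreasing
    have : (0:ℝ) ∈ Set.Ioo (W.eval v) (W.eval u) := ⟨hv', hu⟩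
    obtain ⟨r, hr, hr0⟩ := intermediate_value_Ioo' (le_of_lt huv) hc this
    exact ⟨r, hr.1, hr.2, hr0⟩
  · have : (0:ℝ) ∈ Set.Ioo (W.eval u) (W.eval v) := ⟨hu, hv'⟩
    obtain ⟨r, hr, hr0⟩ := intermediate_value_Ioo (le_of_lt huv) hc this
    exact ⟨r, hr.1, hr.2, hr0⟩

lemma sign_persist {W : ℝ[X]} {u v c : ℝ} (huv : u ≤ v)
    (hnr : ∀ r, u ≤ r → r ≤ v → W.eval r ≠ 0) (h : 0 < c * W.eval u) :
    0 < c * W.eval v := by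
  rcases eq_or_lt_of_le huv with rfl | huv'
  · exact h
  by_contra hle
  push_neg at hle
  have hvne : W.eval v ≠ 0 := hnr v huv le_rfl
  have hcne : c ≠ 0 := by rintro rfl; simp at h
  have hlt : c * W.eval v < 0 :=
    lt_of_le_of_ne hle (mul_ne_zero hcne hvne)
  have : W.eval u * W.eval v < 0 := by
    nlinarith [mul_pos h (neg_pos.2 hlt), sq_nonneg c]
  obtain ⟨r, h1, h2, h3⟩ := exists_root_between huv' this
  exact hnr r (le_of_lt h1) (le_of_lt h2) h3

lemma card_filter_mono (s : Multiset ℝ) (p q : ℝ → Prop) [DecidablePred p]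
    [DecidablePred q] (h : ∀ x, p x → q x) :
    (s.filter p).card ≤ (s.filter q).card :=
  Multiset.card_le_card (Multiset.monotone_filter_right s h)

lemma card_filter_pair_le (s : Multiset ℝ) (p q r : ℝ → Prop) [DecidablePred p]
    [DecidablePred q] [DecidablePred r]
    (hdisj : ∀ x, ¬(p x ∧ q x)) (himp : ∀ x, p x ∨ q x → r x) :
    (s.filter p).card + (s.filter q).card ≤ (s.filter r).card := by
  have h1 := Multiset.filter_add_filter p q s
  have h2 : (Multiset.filter (fun a => p a ∧ q a) s) = 0 :=
    Multiset.filter_eq_nil.2 (fun a _ => hdisj a)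
  have h3 := congrArg Multiset.card h1
  rw [Multiset.card_add, Multiset.card_add, h2] at h3
  simp only [Multiset.card_zero, add_zero] at h3
  rw [h3]
  exact Multiset.card_le_card (Multiset.monotone_filter_right s himp)

lemma one_le_card_filter {s : Multiset ℝ} {p : ℝ → Prop} [DecidablePred p] {ρ : ℝ}
    (hρ : ρ ∈ s) (hp : p ρ) : 1 ≤ (s.filter p).card := by
  have : ρ ∈ s.filter p := Multiset.mem_filter.2 ⟨hρ, hp⟩
  exact Multiset.card_pos_iff_exists_mem.2 ⟨ρ, this⟩ 

end GaleAux

namespace GaleAux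
open Polynomial

lemma factor_step {W : ℝ[X]} (hW : W ≠ 0) {c : ℝ} (hc : W.eval c = 0) :
    ∃ Q : ℝ[X], Q ≠ 0 ∧ W.roots = c ::ₘ Q.roots ∧
      Multiset.card W.roots = Multiset.card Q.roots + 1 ∧
      (∀ t : ℝ, W.eval t = (t - c) * Q.eval t) := by
  obtain ⟨Q, hQ⟩ := (dvd_iff_isRoot.2 hc)
  have hQ0 : Q ≠ 0 := by rintro rfl; rw [mul_zero] at hQ; exact hW hQ
  have hroots : W.roots = c ::ₘ Q.roots := by
    rw [hQ, roots_mul (by rw [← hQ]; exact hW), roots_X_sub_C,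
      Multiset.singleton_add]
  refine ⟨Q, hQ0, hroots, by rw [hroots]; simp, ?_⟩
  intro t; rw [hQ]; simp

lemma alt_transfer {Q : ℝ[X]} {ε : ℝ} {c : ℝ} {i : ℕ} {w : ℝ}
    (hw : 0 ≤ ε * (-1)^i * w) (heq : w = ((i:ℝ) - c) * Q.eval (i:ℝ))
    (hpos : c < (i:ℝ)) : 0 ≤ ε * (-1)^i * Q.eval (i:ℝ) := by
  by_contra hlt
  push_neg at hlt
  have h1 : (0:ℝ) < (i:ℝ) - c := by linarith
  rw [heq] at hw
  nlinarith [mul_neg_of_pos_of_neg h1 hlt]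

lemma alternation_key (N : ℕ) : ∀ (W : ℝ[X]) (a b : ℕ) (ε : ℝ), W ≠ 0 → (ε = 1 ∨ ε = -1) →
    Multiset.card W.roots + (b - a) ≤ N →
    (∀ i : ℕ, a ≤ i → i ≤ b → 0 ≤ ε * (-1)^i * W.eval (i:ℝ)) →
    (b - a ≤ Multiset.card (W.roots.filter (fun r => (a:ℝ) ≤ r ∧ r ≤ (b:ℝ))) ∧
     (W.eval (a:ℝ) ≠ 0 →
       b - a ≤ Multiset.card (W.roots.filter (fun r => (a:ℝ) < r ∧ r ≤ (b:ℝ))))) := by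
  induction N with
  | zero =>
      intro W a b ε hW hε hN halt
      have hba : b - a = 0 := by omega
      rw [hba]
      exact ⟨Nat.zero_le _, fun _ => Nat.zero_le _⟩
  | succ N ih =>
      intro W a b ε hW hε hN halt
      by_cases hab : b ≤ a
      · have hba : b - a = 0 := by omega
        rw [hba]
        exact ⟨Nat.zero_le _, fun _ => Nat.zero_le _⟩
      · have hab1 : a + 1 ≤ b := by omega
        have hcb : (a:ℝ) + 1 ≤ (b:ℝ) := by exact_mod_cast hab1
        have hc2 : (((a+1:ℕ)):ℝ) = (a:ℝ)+1 := by push_cast; ring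
        have halt' : ∀ i : ℕ, a+1 ≤ i → i ≤ b → 0 ≤ ε * (-1)^i * W.eval (i:ℝ) :=
          fun i h1 h2 => halt i (by omega) h2
        have S2 : W.eval (a:ℝ) ≠ 0 →
            b - a ≤ Multiset.card (W.roots.filter (fun r => (a:ℝ) < r ∧ r ≤ (b:ℝ))) := by
          intro hA
          have h0 : 0 < ε * (-1)^a * W.eval (a:ℝ) :=
            pos_of_alt hε (halt a le_rfl (by omega)) hA
          by_cases hA1 : W.eval ((a:ℝ)+1) = 0
          · -- factor at a+1
            obtain ⟨Q, hQ0, hroots, hcard, heval⟩ := factor_step hW hA1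
            have htrans : ∀ i : ℕ, a+2 ≤ i → i ≤ b → 0 ≤ ε * (-1)^i * Q.eval (i:ℝ) := by
              intro i h1 h2
              refine alt_transfer (halt i (by omega) h2) (heval (i:ℝ)) ?_
              have : ((a:ℕ):ℝ) + 2 ≤ (i:ℝ) := by exact_mod_cast h1
              linarith
            have hWfil : Multiset.card (W.roots.filter (fun r => (a:ℝ) < r ∧ r ≤ (b:ℝ)))
                = 1 + Multiset.card (Q.roots.filter (fun r => (a:ℝ) < r ∧ r ≤ (b:ℝ))) := by
              rw [hroots, Multiset.filter_cons,
                if_pos (show (a:ℝ) < (a:ℝ)+1 ∧ (a:ℝ)+1 ≤ (b:ℝ) from ⟨by linarith, hcb⟩),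
                Multiset.card_add, Multiset.card_singleton]
            by_cases hQ1 : Q.eval ((a:ℝ)+1) = 0
            · have haltQ : ∀ i : ℕ, a+1 ≤ i → i ≤ b → 0 ≤ ε * (-1)^i * Q.eval (i:ℝ) := by
                intro i h1 h2
                rcases Nat.eq_or_lt_of_le h1 with heq | hlt
                · have hz : Q.eval (i:ℝ) = 0 := by
                    rw [← heq, hc2]; exact hQ1
                  rw [hz, mul_zero]
                · exact htrans i (by omega) h2
              have hIHQ : b - (a+1) ≤ Multiset.card
                  (Q.roots.filter (fun r => (((a+1:ℕ)):ℝ) ≤ r ∧ r ≤ (b:ℝ))) :=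
                (ih Q (a+1) b ε hQ0 hε (by omega) haltQ).1
              have hmono : Multiset.card
                    (Q.roots.filter (fun r => (((a+1:ℕ)):ℝ) ≤ r ∧ r ≤ (b:ℝ)))
                  ≤ Multiset.card (Q.roots.filter (fun r => (a:ℝ) < r ∧ r ≤ (b:ℝ))) :=
                card_filter_mono Q.roots (fun r => (((a+1:ℕ)):ℝ) ≤ r ∧ r ≤ (b:ℝ))
                  (fun r => (a:ℝ) < r ∧ r ≤ (b:ℝ))
                (by intro x hx
                    have h1 := hx.1
                    rw [hc2] at h1
                    exact ⟨by linarith, hx.2⟩)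
              omega
            · by_cases hroot : ∃ ρ ∈ W.roots, (a:ℝ) < ρ ∧ ρ < (a:ℝ)+1
              · obtain ⟨ρ, hρm, hρ1, hρ2⟩ := hroot
                have hIHW : b - (a+1) ≤ Multiset.card
                    (W.roots.filter (fun r => (((a+1:ℕ)):ℝ) ≤ r ∧ r ≤ (b:ℝ))) :=
                  (ih W (a+1) b ε hW hε (by omega) halt').1
                have hsplit : Multiset.card
                      (W.roots.filter (fun r => (a:ℝ) < r ∧ r < (a:ℝ)+1))
                    + Multiset.card
                      (W.roots.filter (fun r => (((a+1:ℕ)):ℝ) ≤ r ∧ r ≤ (b:ℝ)))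
                    ≤ Multiset.card (W.roots.filter (fun r => (a:ℝ) < r ∧ r ≤ (b:ℝ))) :=
                  card_filter_pair_le W.roots (fun r => (a:ℝ) < r ∧ r < (a:ℝ)+1)
                    (fun r => (((a+1:ℕ)):ℝ) ≤ r ∧ r ≤ (b:ℝ))
                    (fun r => (a:ℝ) < r ∧ r ≤ (b:ℝ))
                  (by rintro x ⟨⟨_, h1⟩, ⟨h2, _⟩⟩; rw [hc2] at h2; linarith)
                  (by rintro x (⟨h1, h2⟩ | ⟨h1, h2⟩)
                      · exact ⟨h1, by linarith⟩
                      · rw [hc2] at h1; exact ⟨by linarith, h2⟩)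
                have hone : 1 ≤ Multiset.card
                    (W.roots.filter (fun r => (a:ℝ) < r ∧ r < (a:ℝ)+1)) :=
                  one_le_card_filter hρm ⟨hρ1, hρ2⟩
                omega
              · -- sign persists across [a, a+1]
                have hQa : Q.eval (a:ℝ) = - W.eval (a:ℝ) := by
                  have h := heval (a:ℝ)
                  have h2 : ((a:ℝ) - ((a:ℝ)+1)) = -1 := by ring
                  rw [h2] at h; linarith
                have hQapos : 0 < ε * (-1)^(a+1) * Q.eval (a:ℝ) := by
                  have he : ε * (-1)^(a+1) * Q.eval (a:ℝ) = ε * (-1)^a * W.eval (a:ℝ) := by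
                    rw [hQa, pow_succ]; ring
                  rw [he]; exact h0
                have hnr : ∀ r : ℝ, (a:ℝ) ≤ r → r ≤ (a:ℝ)+1 → Q.eval r ≠ 0 := by
                  intro r hr1 hr2 hr0
                  have hW0 : W.eval r = 0 := by rw [heval r, hr0, mul_zero]
                  rcases eq_or_lt_of_le hr2 with heq | hlt
                  · exact hQ1 (heq ▸ hr0)
                  · rcases eq_or_lt_of_le hr1 with heq2 | hlt2
                    · exact hA (heq2 ▸ hW0)
                    · exact hroot ⟨r, (mem_roots hW).2 hW0, hlt2, hlt⟩
                have hQb : 0 < ε * (-1)^(a+1) * Q.eval ((a:ℝ)+1) :=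
                  sign_persist (by linarith) hnr hQapos
                have haltQ : ∀ i : ℕ, a+1 ≤ i → i ≤ b → 0 ≤ ε * (-1)^i * Q.eval (i:ℝ) := by
                  intro i h1 h2
                  rcases Nat.eq_or_lt_of_le h1 with heq | hlt
                  · rw [← heq, hc2]
                    exact le_of_lt hQb
                  · exact htrans i (by omega) h2
                have hQ1' : Q.eval (((a+1:ℕ)):ℝ) ≠ 0 := by
                  rw [hc2]; exact hQ1
                have hIHQ : b - (a+1) ≤ Multiset.card
                    (Q.roots.filter (fun r => (((a+1:ℕ)):ℝ) < r ∧ r ≤ (b:ℝ))) :=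
                  (ih Q (a+1) b ε hQ0 hε (by omega) haltQ).2 hQ1'
                have hmono : Multiset.card
                      (Q.roots.filter (fun r => (((a+1:ℕ)):ℝ) < r ∧ r ≤ (b:ℝ)))
                    ≤ Multiset.card (Q.roots.filter (fun r => (a:ℝ) < r ∧ r ≤ (b:ℝ))) :=
                  card_filter_mono Q.roots (fun r => (((a+1:ℕ)):ℝ) < r ∧ r ≤ (b:ℝ))
                    (fun r => (a:ℝ) < r ∧ r ≤ (b:ℝ))
                  (by intro x hx
                      have h1 := hx.1
                      rw [hc2] at h1
                      exact ⟨by linarith, hx.2⟩)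
                omega
          · -- W(a+1) ≠ 0 : sign change gives root in (a, a+1)
            have halt1 := halt (a+1) (by omega) hab1
            rw [hc2] at halt1
            have h1 : 0 < ε * (-1)^(a+1) * W.eval ((a:ℝ)+1) := pos_of_alt hε halt1 hA1
            have hkey : (ε * (-1)^a * W.eval (a:ℝ)) * (ε * (-1)^(a+1) * W.eval ((a:ℝ)+1))
                = -(W.eval (a:ℝ) * W.eval ((a:ℝ)+1)) := by
              have e1 := eps_sq hε
              have e2 := neg_one_pow_sq a
              rw [pow_succ]
              calc (ε * (-1)^a * W.eval (a:ℝ)) * (ε * ((-1)^a * -1) * W.eval ((a:ℝ)+1))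
                  = (ε*ε) * (((-1:ℝ)^a) * ((-1:ℝ)^a))
                    * (-(W.eval (a:ℝ) * W.eval ((a:ℝ)+1))) := by ring
                _ = -(W.eval (a:ℝ) * W.eval ((a:ℝ)+1)) := by rw [e1, e2]; ring
            have hprod : W.eval (a:ℝ) * W.eval ((a:ℝ)+1) < 0 := by
              have := mul_pos h0 h1
              rw [hkey] at this; linarith
            obtain ⟨ρ, hρ1, hρ2, hρ0⟩ := exists_root_between (by linarith) hprod
            have hρm : ρ ∈ W.roots := (mem_roots hW).2 hρ0
            have hA1' : W.eval (((a+1:ℕ)):ℝ) ≠ 0 := by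
              rw [hc2]; exact hA1
            have hIH : b - (a+1) ≤ Multiset.card
                (W.roots.filter (fun r => (((a+1:ℕ)):ℝ) < r ∧ r ≤ (b:ℝ))) :=
              (ih W (a+1) b ε hW hε (by omega) halt').2 hA1'
            have hsplit : Multiset.card
                  (W.roots.filter (fun r => (a:ℝ) < r ∧ r ≤ (a:ℝ)+1))
                + Multiset.card
                  (W.roots.filter (fun r => (((a+1:ℕ)):ℝ) < r ∧ r ≤ (b:ℝ)))
                ≤ Multiset.card (W.roots.filter (fun r => (a:ℝ) < r ∧ r ≤ (b:ℝ))) :=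
              card_filter_pair_le W.roots (fun r => (a:ℝ) < r ∧ r ≤ (a:ℝ)+1)
                (fun r => (((a+1:ℕ)):ℝ) < r ∧ r ≤ (b:ℝ))
                (fun r => (a:ℝ) < r ∧ r ≤ (b:ℝ))
              (by rintro x ⟨⟨_, h1'⟩, ⟨h2', _⟩⟩; rw [hc2] at h2'; linarith)
              (by rintro x (⟨h1', h2'⟩ | ⟨h1', h2'⟩)
                  · exact ⟨h1', by linarith⟩
                  · rw [hc2] at h1'; exact ⟨by linarith, h2'⟩)
            have hone : 1 ≤ Multiset.card
                (W.roots.filter (fun r => (a:ℝ) < r ∧ r ≤ (a:ℝ)+1)) :=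
              one_le_card_filter hρm ⟨hρ1, le_of_lt hρ2⟩
            omega
        refine ⟨?_, S2⟩
        by_cases hA : W.eval (a:ℝ) = 0
        · obtain ⟨Q, hQ0, hroots, hcard, heval⟩ := factor_step hW hA
          have haltQ : ∀ i : ℕ, a+1 ≤ i → i ≤ b → 0 ≤ ε * (-1)^i * Q.eval (i:ℝ) := by
            intro i h1 h2
            refine alt_transfer (halt i (by omega) h2) (heval (i:ℝ)) ?_
            have h3 : ((a+1:ℕ):ℝ) ≤ (i:ℝ) := by exact_mod_cast h1
            rw [hc2] at h3; linarith
          have hIHQ : b - (a+1) ≤ Multiset.card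
              (Q.roots.filter (fun r => (((a+1:ℕ)):ℝ) ≤ r ∧ r ≤ (b:ℝ))) :=
            (ih Q (a+1) b ε hQ0 hε (by omega) haltQ).1
          have hWfil : Multiset.card (W.roots.filter (fun r => (a:ℝ) ≤ r ∧ r ≤ (b:ℝ)))
              = 1 + Multiset.card (Q.roots.filter (fun r => (a:ℝ) ≤ r ∧ r ≤ (b:ℝ))) := by
            rw [hroots, Multiset.filter_cons,
              if_pos (show (a:ℝ) ≤ (a:ℝ) ∧ (a:ℝ) ≤ (b:ℝ) from ⟨le_rfl, by linarith⟩),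
              Multiset.card_add, Multiset.card_singleton]
          have hmono : Multiset.card
                (Q.roots.filter (fun r => (((a+1:ℕ)):ℝ) ≤ r ∧ r ≤ (b:ℝ)))
              ≤ Multiset.card (Q.roots.filter (fun r => (a:ℝ) ≤ r ∧ r ≤ (b:ℝ))) :=
            card_filter_mono Q.roots (fun r => (((a+1:ℕ)):ℝ) ≤ r ∧ r ≤ (b:ℝ))
              (fun r => (a:ℝ) ≤ r ∧ r ≤ (b:ℝ))
            (by intro x hx
                have h1 := hx.1
                rw [hc2] at h1
                exact ⟨by linarith, hx.2⟩)
          omega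
        · have h2 := S2 hA
          have hmono : Multiset.card (W.roots.filter (fun r => (a:ℝ) < r ∧ r ≤ (b:ℝ)))
              ≤ Multiset.card (W.roots.filter (fun r => (a:ℝ) ≤ r ∧ r ≤ (b:ℝ))) :=
            card_filter_mono W.roots (fun r => (a:ℝ) < r ∧ r ≤ (b:ℝ))
              (fun r => (a:ℝ) ≤ r ∧ r ≤ (b:ℝ))
            (by intro x hx; exact ⟨le_of_lt hx.1, hx.2⟩)
          omega

end GaleAux

namespace GaleAux
open Polynomial

attribute [local instance] Classical.propDecidable

def good (W : ℝ[X]) (i : ℕ) : Prop := 0 < (-1:ℝ)^i * W.eval (i:ℝ)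

lemma type_const (W : ℝ[X]) (a e : ℕ)
    (h : ∀ j, a < j → j ≤ e → (good W j ↔ good W (j-1))) :
    ∀ i, a ≤ i → i ≤ e → (good W i ↔ good W a) := by
  intro i
  induction i with
  | zero => intro h1 _; have : a = 0 := by omega
            rw [this]
  | succ k ihk =>
      intro h1 h2
      rcases Nat.eq_or_lt_of_le h1 with heq | hlt
      · rw [heq]
      · have hk : a ≤ k := by omega
        have := h (k+1) (by omega) h2
        simp only [Nat.add_sub_cancel] at this
        exact this.trans (ihk hk (by omega))

lemma block_alt (W : ℝ[X]) (a e : ℕ)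
    (hconst : ∀ i, a ≤ i → i ≤ e → (good W i ↔ good W a)) :
    ∃ ε : ℝ, (ε = 1 ∨ ε = -1) ∧
      ∀ i, a ≤ i → i ≤ e → 0 ≤ ε * (-1)^i * W.eval (i:ℝ) := by
  by_cases hg : good W a
  · refine ⟨1, Or.inl rfl, ?_⟩
    intro i h1 h2
    have : good W i := (hconst i h1 h2).2 hg
    have h3 : 0 < (-1:ℝ)^i * W.eval (i:ℝ) := this
    linarith
  · refine ⟨-1, Or.inr rfl, ?_⟩
    intro i h1 h2
    have : ¬ good W i := fun hgi => hg ((hconst i h1 h2).1 hgi)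
    have h3 : ¬ (0 < (-1:ℝ)^i * W.eval (i:ℝ)) := this
    push_neg at h3
    linarith

lemma block_count (W : ℝ[X]) (hW : W ≠ 0) :
    ∀ (m a b : ℕ), b - a ≤ m →
    b - a ≤ Multiset.card (W.roots.filter (fun r => (a:ℝ) ≤ r ∧ r ≤ (b:ℝ)))
      + ((Finset.Ioc a b).filter (fun i => ¬(good W i ↔ good W (i-1)))).card := by
  intro m
  induction m with
  | zero => intro a b hm; omega
  | succ m ihm =>
      intro a b hm
      by_cases hab : b ≤ a
      · omega
      · by_cases hS : ((Finset.Ioc a b).filter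
            (fun i => ¬(good W i ↔ good W (i-1)))).Nonempty
        · obtain ⟨c₀, hc₀T, hc₀min⟩ :
              ∃ c₀, c₀ ∈ (Finset.Ioc a b).filter (fun i => ¬(good W i ↔ good W (i-1)))
                ∧ ∀ j ∈ (Finset.Ioc a b).filter (fun i => ¬(good W i ↔ good W (i-1))),
                  c₀ ≤ j :=
            ⟨_, Finset.min'_mem _ hS, fun j hj => Finset.min'_le _ j hj⟩
          have hc₀mem := hc₀T
          rw [Finset.mem_filter, Finset.mem_Ioc] at hc₀mem
          have hac : a < c₀ := hc₀mem.1.1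
          have hcb : c₀ ≤ b := hc₀mem.1.2
          -- no start strictly between a and c₀
          have hmin : ∀ j, a < j → j < c₀ → (good W j ↔ good W (j-1)) := by
            intro j hj1 hj2
            by_contra hcon
            have hmem : j ∈ (Finset.Ioc a b).filter
                (fun i => ¬(good W i ↔ good W (i-1))) := by
              rw [Finset.mem_filter, Finset.mem_Ioc]
              exact ⟨⟨hj1, by omega⟩, hcon⟩
            have := hc₀min j hmem
            omega
          -- block [a, c₀ - 1]
          have hconst := type_const W a (c₀-1) (fun j h1 h2 => hmin j h1 (by omega))
          obtain ⟨ε, hε, halt⟩ := block_alt W a (c₀-1) hconst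
          have hL1 : (c₀-1) - a ≤ Multiset.card
              (W.roots.filter (fun r => (a:ℝ) ≤ r ∧ r ≤ (((c₀-1:ℕ)):ℝ))) :=
            (alternation_key (Multiset.card W.roots + ((c₀-1) - a)) W a (c₀-1) ε hW hε
              le_rfl halt).1
          have hIH := ihm c₀ b (by omega)
          -- combine interval counts
          have hc1 : (((c₀-1:ℕ)):ℝ) < (c₀:ℝ) := by
            have h1 : ((c₀-1:ℕ):ℝ) = (c₀:ℝ) - 1 := by
              have : (1:ℕ) ≤ c₀ := by omega
              push_cast [Nat.cast_sub this]
              ring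
            rw [h1]; linarith
          have hsplit : Multiset.card
                (W.roots.filter (fun r => (a:ℝ) ≤ r ∧ r ≤ (((c₀-1:ℕ)):ℝ)))
              + Multiset.card (W.roots.filter (fun r => (c₀:ℝ) ≤ r ∧ r ≤ (b:ℝ)))
              ≤ Multiset.card (W.roots.filter (fun r => (a:ℝ) ≤ r ∧ r ≤ (b:ℝ))) :=
            card_filter_pair_le W.roots
              (fun r => (a:ℝ) ≤ r ∧ r ≤ (((c₀-1:ℕ)):ℝ))
              (fun r => (c₀:ℝ) ≤ r ∧ r ≤ (b:ℝ))
              (fun r => (a:ℝ) ≤ r ∧ r ≤ (b:ℝ))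
              (by rintro x ⟨⟨_, h1⟩, ⟨h2, _⟩⟩; linarith)
              (by have hacr : (a:ℝ) ≤ (c₀:ℝ) := by exact_mod_cast le_of_lt hac
                  have hcbr : (c₀:ℝ) ≤ (b:ℝ) := by exact_mod_cast hcb
                  rintro x (⟨h1, h2⟩ | ⟨h1, h2⟩)
                  · exact ⟨h1, by linarith⟩
                  · exact ⟨by linarith, h2⟩)
          -- starts count split
          have hstart : ((Finset.Ioc a b).filter
                (fun i => ¬(good W i ↔ good W (i-1)))).card
              = 1 + ((Finset.Ioc c₀ b).filter
                (fun i => ¬(good W i ↔ good W (i-1)))).card := by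
            have heq : (Finset.Ioc a b).filter (fun i => ¬(good W i ↔ good W (i-1)))
                = insert c₀ ((Finset.Ioc c₀ b).filter
                    (fun i => ¬(good W i ↔ good W (i-1)))) := by
              ext j
              simp only [Finset.mem_filter, Finset.mem_Ioc, Finset.mem_insert]
              constructor
              · rintro ⟨⟨hj1, hj2⟩, hj3⟩
                rcases Nat.lt_trichotomy j c₀ with hlt | heq' | hgt
                · exact absurd (hmin j hj1 hlt) hj3
                · exact Or.inl heq'
                · exact Or.inr ⟨⟨hgt, hj2⟩, hj3⟩
              · rintro (rfl | ⟨⟨hj1, hj2⟩, hj3⟩)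
                · exact ⟨⟨hac, hcb⟩, hc₀mem.2⟩
                · exact ⟨⟨by omega, hj2⟩, hj3⟩
            rw [heq, Finset.card_insert_of_notMem (by
              simp only [Finset.mem_filter, Finset.mem_Ioc]
              rintro ⟨⟨h1, _⟩, _⟩
              omega)]
            omega
          omega
        · have hnos : ∀ j, a < j → j ≤ b → (good W j ↔ good W (j-1)) := by
            intro j h1 h2
            by_contra hcon
            exact hS ⟨j, by rw [Finset.mem_filter, Finset.mem_Ioc]
                            exact ⟨⟨h1, h2⟩, hcon⟩⟩
          have hconst := type_const W a b hnos
          obtain ⟨ε, hε, halt⟩ := block_alt W a b hconst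
          have hL1 : b - a ≤ Multiset.card
              (W.roots.filter (fun r => (a:ℝ) ≤ r ∧ r ≤ (b:ℝ))) :=
            (alternation_key (Multiset.card W.roots + (b - a)) W a b ε hW hε
              le_rfl halt).1
          omega

end GaleAux

namespace GaleAux

attribute [local instance] Classical.propDecidable

variable (P : ℕ → Prop) (d : ℕ)

noncomputable def GFs : Finset ℕ := (Finset.range d).filter (fun i => P i ∧ (i = 0 ∨ ¬ P (i-1)))
noncomputable def BFs : Finset ℕ := (Finset.range d).filter (fun i => ¬P i ∧ (i = 0 ∨ P (i-1)))

lemma card_GF_BF (hd : 1 ≤ d) :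
    (GFs P d).card + (BFs P d).card
      = 1 + ((Finset.Ioc 0 (d-1)).filter (fun i => ¬(P i ↔ P (i-1)))).card := by
  have hdisj : Disjoint (GFs P d) (BFs P d) := by
    rw [Finset.disjoint_left]
    intro x hx hx'
    rw [GFs, Finset.mem_filter] at hx
    rw [BFs, Finset.mem_filter] at hx'
    exact hx'.2.1 hx.2.1
  have hunion : GFs P d ∪ BFs P d
      = insert 0 ((Finset.Ioc 0 (d-1)).filter (fun i => ¬(P i ↔ P (i-1)))) := by
    ext i
    simp only [Finset.mem_union, GFs, BFs, Finset.mem_filter, Finset.mem_range,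
      Finset.mem_insert, Finset.mem_Ioc]
    by_cases hi0 : i = 0
    · subst hi0
      constructor
      · intro _; exact Or.inl rfl
      · intro _
        by_cases hP0 : P 0
        · exact Or.inl ⟨by omega, hP0, Or.inl rfl⟩
        · exact Or.inr ⟨by omega, hP0, Or.inl rfl⟩
    · constructor
      · rintro (⟨h1, h2, h3⟩ | ⟨h1, h2, h3⟩)
        · rcases h3 with h3 | h3
          · exact absurd h3 hi0
          · exact Or.inr ⟨⟨by omega, by omega⟩, fun hiff => h3 (hiff.1 h2)⟩
        · rcases h3 with h3 | h3
          · exact absurd h3 hi0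
          · exact Or.inr ⟨⟨by omega, by omega⟩, fun hiff => h2 (hiff.2 h3)⟩
      · rintro (h | ⟨⟨hgt, hle⟩, hniff⟩)
        · exact absurd h hi0
        · by_cases hPi : P i
          · exact Or.inl ⟨by omega, hPi,
              Or.inr (fun hpi1 => hniff ⟨fun _ => hpi1, fun _ => hPi⟩)⟩
          · refine Or.inr ⟨by omega, hPi, Or.inr ?_⟩
            by_contra hn
            exact hniff ⟨fun h => absurd h hPi, fun h => absurd h hn⟩
  have h0nm : (0:ℕ) ∉ (Finset.Ioc 0 (d-1)).filter (fun i => ¬(P i ↔ P (i-1))) := by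
    simp [Finset.mem_filter, Finset.mem_Ioc]
  calc (GFs P d).card + (BFs P d).card = (GFs P d ∪ BFs P d).card :=
        (Finset.card_union_of_disjoint hdisj).symm
    _ = 1 + ((Finset.Ioc 0 (d-1)).filter (fun i => ¬(P i ↔ P (i-1)))).card := by
        rw [hunion, Finset.card_insert_of_notMem h0nm, add_comm]

lemma exists_GF_le {j : ℕ} (hj : j < d) (hPj : P j) : ∃ m ∈ GFs P d, m ≤ j := by
  have hne : ((Finset.range d).filter (fun k => P k ∧ k ≤ j)).Nonempty :=
    ⟨j, by rw [Finset.mem_filter, Finset.mem_range]; exact ⟨hj, hPj, le_rfl⟩⟩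
  set m := ((Finset.range d).filter (fun k => P k ∧ k ≤ j)).min' hne with hm
  have hmmem := Finset.min'_mem _ hne
  rw [Finset.mem_filter, Finset.mem_range] at hmmem
  refine ⟨m, ?_, hmmem.2.2⟩
  rw [GFs, Finset.mem_filter, Finset.mem_range]
  refine ⟨hmmem.1, hmmem.2.1, ?_⟩
  by_cases hm0 : m = 0
  · exact Or.inl hm0
  · refine Or.inr (fun hPm1 => ?_)
    have : m - 1 ∈ (Finset.range d).filter (fun k => P k ∧ k ≤ j) := by
      rw [Finset.mem_filter, Finset.mem_range]
      exact ⟨by omega, hPm1, by omega⟩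
    have := Finset.min'_le _ _ this
    omega

lemma exists_GF_between {i j : ℕ} (hj : j < d) (hPj : P j) (hij : i < j) (hPi : ¬ P i) :
    ∃ m ∈ GFs P d, i < m ∧ m ≤ j := by
  have hne : ((Finset.range d).filter (fun k => P k ∧ i < k ∧ k ≤ j)).Nonempty :=
    ⟨j, by rw [Finset.mem_filter, Finset.mem_range]; exact ⟨hj, hPj, hij, le_rfl⟩⟩
  set m := ((Finset.range d).filter (fun k => P k ∧ i < k ∧ k ≤ j)).min' hne with hm
  have hmmem := Finset.min'_mem _ hne
  rw [Finset.mem_filter, Finset.mem_range] at hmmem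
  refine ⟨m, ?_, hmmem.2.2⟩
  rw [GFs, Finset.mem_filter, Finset.mem_range]
  refine ⟨hmmem.1, hmmem.2.1, Or.inr (fun hPm1 => ?_)⟩
  have hmi : i < m := hmmem.2.2.1
  by_cases hmeq : m - 1 = i
  · exact hPi (hmeq ▸ hPm1)
  · have : m - 1 ∈ (Finset.range d).filter (fun k => P k ∧ i < k ∧ k ≤ j) := by
      rw [Finset.mem_filter, Finset.mem_range]
      exact ⟨by omega, hPm1, by omega, by omega⟩
    have := Finset.min'_le _ _ this
    omega

lemma BF_le_GF_erase (hd2 : 2 ≤ d) (hPd : P (d-1)) :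
    (BFs P d).card ≤ ((GFs P d).erase 0).card := by
  classical
  set f : ℕ → ℕ := fun i =>
    if h : ((GFs P d).filter (fun j => i < j)).Nonempty
    then ((GFs P d).filter (fun j => i < j)).min' h else 0 with hf
  have hmem : ∀ i ∈ BFs P d, (((GFs P d).filter (fun j => i < j)).Nonempty)
      ∧ f i ∈ (GFs P d).erase 0 ∧ i < f i := by
    intro i hi
    rw [BFs, Finset.mem_filter, Finset.mem_range] at hi
    have hid : i < d - 1 := by
      rcases Nat.lt_or_ge i (d-1) with h | h
      · exact h
      · exfalso; have : i = d - 1 := by omega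
        exact hi.2.1 (this ▸ hPd)
    obtain ⟨m, hmGF, him, hmd⟩ := exists_GF_between P d (j := d-1)
      (by omega) hPd hid hi.2.1
    have hne : ((GFs P d).filter (fun j => i < j)).Nonempty :=
      ⟨m, by rw [Finset.mem_filter]; exact ⟨hmGF, him⟩⟩
    have hfi : f i = ((GFs P d).filter (fun j => i < j)).min' hne := by
      rw [hf]; simp only [dif_pos hne]
    have hfmem := Finset.min'_mem _ hne
    rw [Finset.mem_filter] at hfmem
    refine ⟨hne, ?_, by rw [hfi]; exact hfmem.2⟩
    rw [Finset.mem_erase]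
    constructor
    · have : i < f i := by rw [hfi]; exact hfmem.2
      omega
    · rw [hfi]; exact hfmem.1
  have hmono : ∀ i ∈ BFs P d, ∀ i' ∈ BFs P d, i < i' → f i < f i' := by
    intro i hi i' hi' hlt
    obtain ⟨hne, _, _⟩ := hmem i hi
    obtain ⟨hne', _, hlt'⟩ := hmem i' hi'
    have hi'' := hi'
    rw [BFs, Finset.mem_filter, Finset.mem_range] at hi''
    have hi''' := hi
    rw [BFs, Finset.mem_filter, Finset.mem_range] at hi'''
    have hPprev : P (i'-1) := by
      rcases hi''.2.2 with h | h
      · omega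
      · exact h
    have hii' : i < i' - 1 := by
      by_cases h : i = i' - 1
      · exfalso; rw [← h] at hPprev; exact hi'''.2.1 hPprev
      · omega
    obtain ⟨m, hmGF, him, hmd⟩ := exists_GF_between P d (j := i'-1)
      (by omega) hPprev hii' hi'''.2.1
    have hfile : f i ≤ m := by
      have hfi : f i = ((GFs P d).filter (fun j => i < j)).min' hne := by
        rw [hf]; simp only [dif_pos hne]
      rw [hfi]
      exact Finset.min'_le _ _ (by rw [Finset.mem_filter]; exact ⟨hmGF, him⟩)
    omega
  apply Finset.card_le_card_of_injOn f (fun i hi => (hmem i hi).2.1)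
  intro i hi i' hi' hff
  rcases Nat.lt_trichotomy i i' with h | h | h
  · exact absurd hff (Nat.ne_of_lt (hmono i hi i' hi' h))
  · exact h
  · exact absurd hff.symm (Nat.ne_of_lt (hmono i' hi' i hi h))

lemma BF_erase_le_GF (hd : 1 ≤ d) :
    ((BFs P d).erase 0).card ≤ (GFs P d).card := by
  classical
  set f : ℕ → ℕ := fun i =>
    if h : ((GFs P d).filter (fun j => j < i)).Nonempty
    then ((GFs P d).filter (fun j => j < i)).max' h else 0 with hf
  have hmem : ∀ i ∈ (BFs P d).erase 0, (((GFs P d).filter (fun j => j < i)).Nonempty)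
      ∧ f i ∈ GFs P d ∧ f i < i := by
    intro i hi
    rw [Finset.mem_erase] at hi
    have hi0 : i ≠ 0 := hi.1
    have hi' := hi.2
    rw [BFs, Finset.mem_filter, Finset.mem_range] at hi'
    have hPprev : P (i-1) := by
      rcases hi'.2.2 with h | h
      · exact absurd h hi0
      · exact h
    obtain ⟨m, hmGF, hmd⟩ := exists_GF_le P d (j := i-1) (by omega) hPprev
    have hne : ((GFs P d).filter (fun j => j < i)).Nonempty :=
      ⟨m, by rw [Finset.mem_filter]; exact ⟨hmGF, by omega⟩⟩
    have hfi : f i = ((GFs P d).filter (fun j => j < i)).max' hne := by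
      rw [hf]; simp only [dif_pos hne]
    have hfmem := Finset.max'_mem _ hne
    rw [Finset.mem_filter] at hfmem
    exact ⟨hne, by rw [hfi]; exact hfmem.1, by rw [hfi]; exact hfmem.2⟩
  have hmono : ∀ i ∈ (BFs P d).erase 0, ∀ i' ∈ (BFs P d).erase 0, i < i' → f i < f i' := by
    intro i hi i' hi' hlt
    obtain ⟨hne, _, hfilt⟩ := hmem i hi
    obtain ⟨hne', _, _⟩ := hmem i' hi'
    have hiB := hi; rw [Finset.mem_erase] at hiB
    have hi'B := hi'; rw [Finset.mem_erase] at hi'B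
    have hibf := hiB.2; rw [BFs, Finset.mem_filter, Finset.mem_range] at hibf
    have hi'bf := hi'B.2; rw [BFs, Finset.mem_filter, Finset.mem_range] at hi'bf
    have hPprev : P (i'-1) := by
      rcases hi'bf.2.2 with h | h
      · exact absurd h hi'B.1
      · exact h
    have hii' : i < i' - 1 := by
      by_cases h : i = i' - 1
      · exfalso; rw [← h] at hPprev; exact hibf.2.1 hPprev
      · omega
    obtain ⟨m, hmGF, him, hmd⟩ := exists_GF_between P d (j := i'-1)
      (by omega) hPprev hii' hibf.2.1
    have : m ≤ f i' := by
      have hfi : f i' = ((GFs P d).filter (fun j => j < i')).max' hne' := by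
        rw [hf]; simp only [dif_pos hne']
      rw [hfi]
      exact Finset.le_max' _ _ (by rw [Finset.mem_filter]; exact ⟨hmGF, by omega⟩)
    omega
  apply Finset.card_le_card_of_injOn f (fun i hi => (hmem i hi).2.1)
  intro i hi i' hi' hff
  rcases Nat.lt_trichotomy i i' with h | h | h
  · exact absurd hff (Nat.ne_of_lt (hmono i hi i' hi' h))
  · exact h
  · exact absurd hff.symm (Nat.ne_of_lt (hmono i' hi' i hi h))

lemma select (hd2 : 2 ≤ d) {s : ℕ} (hs : 1 ≤ s)
    (hcards : 2*s ≤ (GFs P d).card + (BFs P d).card) :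
    ∃ S : Finset ℕ, S.card = s ∧ (∀ p ∈ S, p < d ∧ P p) ∧
      (∀ p ∈ S, ∀ q ∈ S, (p+1) % d ≠ q) := by
  classical
  by_cases hboth : P 0 ∧ P (d-1)
  · have h0GF : 0 ∈ GFs P d := by
      rw [GFs, Finset.mem_filter, Finset.mem_range]
      exact ⟨by omega, hboth.1, Or.inl rfl⟩
    have h1 : (BFs P d).card ≤ ((GFs P d).erase 0).card :=
      BF_le_GF_erase P d hd2 hboth.2
    have h2 : ((GFs P d).erase 0).card = (GFs P d).card - 1 :=
      Finset.card_erase_of_mem h0GF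
    have hGFcard : 1 ≤ (GFs P d).card := Finset.card_pos.2 ⟨0, h0GF⟩
    have hGF : s ≤ ((GFs P d).erase 0).card := by omega
    obtain ⟨S, hSsub, hScard⟩ := Finset.exists_subset_card_eq hGF
    refine ⟨S, hScard, ?_, ?_⟩
    · intro p hp
      have hpe := Finset.mem_erase.1 (hSsub hp)
      have := hpe.2
      rw [GFs, Finset.mem_filter, Finset.mem_range] at this
      exact ⟨this.1, this.2.1⟩
    · intro p hp q hq heq
      have hpe := Finset.mem_erase.1 (hSsub hp)
      have hqe := Finset.mem_erase.1 (hSsub hq)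
      have hpGF := hpe.2; rw [GFs, Finset.mem_filter, Finset.mem_range] at hpGF
      have hqGF := hqe.2; rw [GFs, Finset.mem_filter, Finset.mem_range] at hqGF
      by_cases hp1 : p + 1 < d
      · rw [Nat.mod_eq_of_lt hp1] at heq
        rcases hqGF.2.2 with h | h
        · exact hqe.1 (heq ▸ h)
        · rw [← heq] at h
          simp only [Nat.add_sub_cancel] at h
          exact h hpGF.2.1
      · have hpd : p + 1 = d := by omega
        rw [hpd, Nat.mod_self] at heq
        exact hqe.1 heq.symm
  · have h1 : ((BFs P d).erase 0).card ≤ (GFs P d).card := BF_erase_le_GF P d (by omega)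
    have hGF : s ≤ (GFs P d).card := by
      by_cases hP0 : P 0
      · have h0nB : 0 ∉ BFs P d := by
          rw [BFs, Finset.mem_filter]
          rintro ⟨_, h, _⟩
          exact h hP0
        have h3 : ((BFs P d).erase 0).card = (BFs P d).card := by
          rw [Finset.erase_eq_of_notMem h0nB]
        omega
      · have h2 : (BFs P d).card ≤ ((BFs P d).erase 0).card + 1 := by
          by_cases h0B : 0 ∈ BFs P d
          · rw [Finset.card_erase_of_mem h0B]
            have : 1 ≤ (BFs P d).card := Finset.card_pos.2 ⟨0, h0B⟩
            omega
          · rw [Finset.erase_eq_of_notMem h0B]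
            omega
        omega
    obtain ⟨S, hSsub, hScard⟩ := Finset.exists_subset_card_eq hGF
    refine ⟨S, hScard, ?_, ?_⟩
    · intro p hp
      have := hSsub hp
      rw [GFs, Finset.mem_filter, Finset.mem_range] at this
      exact ⟨this.1, this.2.1⟩
    · intro p hp q hq heq
      have hpGF := hSsub hp; rw [GFs, Finset.mem_filter, Finset.mem_range] at hpGF
      have hqGF := hSsub hq; rw [GFs, Finset.mem_filter, Finset.mem_range] at hqGF
      by_cases hp1 : p + 1 < d
      · rw [Nat.mod_eq_of_lt hp1] at heq
        rcases hqGF.2.2 with h | h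
        · omega
        · rw [← heq] at h
          simp only [Nat.add_sub_cancel] at h
          exact h hpGF.2.1
      · have hpd : p + 1 = d := by omega
        rw [hpd, Nat.mod_self] at heq
        have hq0 : q = 0 := heq.symm
        have hpd1 : p = d - 1 := by omega
        exact hboth ⟨hq0 ▸ hqGF.2.1, hpd1 ▸ hpGF.2.1⟩

end GaleAux

namespace GaleAux
open Polynomial

noncomputable def cnorm (n : ℕ) (i : ℕ) : ℝ :=
  Real.sqrt (∑ j : Fin (n+1), (((i:ℕ):ℝ)^(j:ℕ))^2)

lemma cnorm_pos (n i : ℕ) : 0 < cnorm n i := by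
  rw [cnorm, Real.sqrt_pos]
  apply Finset.sum_pos'
  · intro j _; positivity
  · exact ⟨⟨0, by omega⟩, Finset.mem_univ _, by norm_num⟩

lemma cnorm_sq (n i : ℕ) : (cnorm n i)^2 = ∑ j : Fin (n+1), (((i:ℕ):ℝ)^(j:ℕ))^2 := by
  rw [cnorm, Real.sq_sqrt (by positivity)]

end GaleAux

/-- A subset of `{1,…,d}` (modeled as `Fin d`) is stable if it contains no two
elements that are consecutive modulo `d`. -/
def Stable {d : ℕ} (A : Finset (Fin d)) : Prop :=
  ∀ i ∈ A, ∀ j ∈ A, ((i : ℕ) + 1) % d ≠ (j : ℕ)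

theorem gale_schrijver {d s : ℕ} (hs : 1 ≤ s) (hd : 2 * s ≤ d) :
    ∃ y : Fin d → (Fin (d - 2 * s + 1) → ℝ),
      (∀ i, ∑ j, y i j ^ 2 = 1) ∧
      ∀ x : Fin (d - 2 * s + 1) → ℝ, ∑ j, x j ^ 2 = 1 →
        ∃ A : Finset (Fin d), A.card = s ∧ Stable A ∧ ∀ i ∈ A, 0 < ∑ j, x j * y i j := by
  classical
  open GaleAux in
  have hd2 : 2 ≤ d := by omega
  refine ⟨fun i j => ((-1:ℝ)^(i:ℕ) * ((i:ℕ):ℝ)^(j:ℕ)) / GaleAux.cnorm (d-2*s) (i:ℕ),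
    ?_, ?_⟩
  · intro i
    show ∑ j : Fin (d-2*s+1),
        (((-1:ℝ)^(i:ℕ) * ((i:ℕ):ℝ)^(j:ℕ)) / GaleAux.cnorm (d-2*s) (i:ℕ))^2 = 1
    have hc := GaleAux.cnorm_pos (d-2*s) (i:ℕ)
    calc ∑ j : Fin (d-2*s+1),
          (((-1:ℝ)^(i:ℕ) * ((i:ℕ):ℝ)^(j:ℕ)) / GaleAux.cnorm (d-2*s) (i:ℕ))^2
        = ∑ j : Fin (d-2*s+1),
            ((((i:ℕ):ℝ)^(j:ℕ))^2) / (GaleAux.cnorm (d-2*s) (i:ℕ))^2 := by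
          apply Finset.sum_congr rfl
          intro j _
          rw [div_pow, mul_pow,
            show ((-1:ℝ)^(i:ℕ))^2 = 1 from by rw [sq]; exact GaleAux.neg_one_pow_sq _,
            one_mul]
      _ = (∑ j : Fin (d-2*s+1), (((i:ℕ):ℝ)^(j:ℕ))^2)
            / (GaleAux.cnorm (d-2*s) (i:ℕ))^2 := by rw [Finset.sum_div]
      _ = 1 := by rw [← GaleAux.cnorm_sq]; exact div_self (by positivity)
  · intro x hx
    set W : Polynomial ℝ := ∑ j : Fin (d-2*s+1), Polynomial.monomial (j:ℕ) (x j)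
      with hWdef
    obtain ⟨j₀, hj₀⟩ : ∃ j, x j ≠ 0 := by
      by_contra hall
      push_neg at hall
      simp [hall] at hx
    have hcoeff : W.coeff (j₀:ℕ) = x j₀ := by
      rw [hWdef, Polynomial.finset_sum_coeff]
      rw [Finset.sum_eq_single j₀]
      · rw [Polynomial.coeff_monomial, if_pos rfl]
      · intro j _ hj
        rw [Polynomial.coeff_monomial, if_neg (fun h => hj (Fin.ext h))]
      · intro h; exact absurd (Finset.mem_univ _) h
    have hWne : W ≠ 0 := fun h => hj₀ (by rw [← hcoeff, h, Polynomial.coeff_zero])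
    have hdeg : W.natDegree ≤ d - 2*s := by
      rw [hWdef]
      apply Polynomial.natDegree_sum_le_of_forall_le
      intro j _
      exact le_trans (Polynomial.natDegree_monomial_le (x j)) (by have := j.isLt; omega)
    have hroots : Multiset.card W.roots ≤ d - 2*s :=
      le_trans (Polynomial.card_roots' W) hdeg
    have heval : ∀ t : ℝ, W.eval t = ∑ j : Fin (d-2*s+1), x j * t^(j:ℕ) := by
      intro t
      rw [hWdef, Polynomial.eval_finset_sum]
      exact Finset.sum_congr rfl (fun j _ => Polynomial.eval_monomial)
    have hinner : ∀ i : Fin d,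
        (∑ j : Fin (d-2*s+1),
          x j * (((-1:ℝ)^(i:ℕ) * ((i:ℕ):ℝ)^(j:ℕ)) / GaleAux.cnorm (d-2*s) (i:ℕ)))
        = ((-1:ℝ)^(i:ℕ) * W.eval ((i:ℕ):ℝ)) / GaleAux.cnorm (d-2*s) (i:ℕ) := by
      intro i
      calc ∑ j : Fin (d-2*s+1),
            x j * (((-1:ℝ)^(i:ℕ) * ((i:ℕ):ℝ)^(j:ℕ)) / GaleAux.cnorm (d-2*s) (i:ℕ))
          = ∑ j : Fin (d-2*s+1),
              ((-1:ℝ)^(i:ℕ) * (x j * ((i:ℕ):ℝ)^(j:ℕ))) / GaleAux.cnorm (d-2*s) (i:ℕ) :=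
            Finset.sum_congr rfl (fun j _ => by ring)
        _ = ((-1:ℝ)^(i:ℕ) * ∑ j : Fin (d-2*s+1), x j * ((i:ℕ):ℝ)^(j:ℕ))
              / GaleAux.cnorm (d-2*s) (i:ℕ) := by
            rw [← Finset.sum_div, ← Finset.mul_sum]
        _ = ((-1:ℝ)^(i:ℕ) * W.eval ((i:ℕ):ℝ)) / GaleAux.cnorm (d-2*s) (i:ℕ) := by
            rw [heval]
    -- root counting gives the start count
    have hblock := GaleAux.block_count W hWne (d-1) 0 (d-1) (by omega)
    have hfle : Multiset.card (W.roots.filter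
          (fun r => ((0:ℕ):ℝ) ≤ r ∧ r ≤ (((d-1:ℕ)):ℝ)))
        ≤ Multiset.card W.roots :=
      Multiset.card_le_card (Multiset.filter_le _ _)
    have hK := GaleAux.card_GF_BF (GaleAux.good W) d (by omega)
    have hKge : 2*s ≤ (GaleAux.GFs (GaleAux.good W) d).card
        + (GaleAux.BFs (GaleAux.good W) d).card := by omega
    obtain ⟨S, hScard, hSmem, hSstable⟩ :=
      GaleAux.select (GaleAux.good W) d hd2 hs hKge
    refine ⟨S.attachFin (fun m hm => (hSmem m hm).1), ?_, ?_, ?_⟩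
    · rw [Finset.card_attachFin, hScard]
    · intro i hi j hj
      rw [Finset.mem_attachFin] at hi hj
      exact hSstable (i:ℕ) hi (j:ℕ) hj
    · intro i hi
      rw [Finset.mem_attachFin] at hi
      show 0 < ∑ j : Fin (d-2*s+1),
        x j * (((-1:ℝ)^(i:ℕ) * ((i:ℕ):ℝ)^(j:ℕ)) / GaleAux.cnorm (d-2*s) (i:ℕ))
      rw [hinner i]
      have hgood : GaleAux.good W (i:ℕ) := (hSmem (i:ℕ) hi).2
      exact div_pos hgood (GaleAux.cnorm_pos _ _)
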